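/- Let 0<β<1 and ε>0, and define n_k = ⌊k^(1/(1-β)+ε)⌋ for k ∈ ℕ. Then for every M>0 there exists n₀ ∈ ℕ such that for all n > n₀, the interval [n - M·n^β, n + M·n^β] contains at most one element of the sequence {n_k}. -/

import Mathlib

open Filter Real

private lemma aux_ev {A B C c d : ℝ} (hA : 0 < A) (hd : 0 ≤ d) (hdc : d < c) (hC : 0 ≤ C) :
    ∀ᶠ x : ℝ in atTop, B * x ^ d + C < A * x ^ c := by
  have h1 : Tendsto (fun x : ℝ => A * x ^ (c - d)) atTop atTop :=
    (tendsto_rpow_atTop (by linarith)).const_mul_atTop hA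
  filter_upwards [h1.eventually_ge_atTop (B + C + 1), eventually_ge_atTop (1 : ℝ)]
    with x hx hx1
  have hx0 : (0 : ℝ) < x := lt_of_lt_of_le zero_lt_one hx1
  have hxd : 1 ≤ x ^ d := Real.one_le_rpow hx1 hd
  have hsplit : A * x ^ c = (A * x ^ (c - d)) * x ^ d := by
    rw [mul_assoc, ← Real.rpow_add hx0]; ring_nf
  have h2 : (B + C + 1) * x ^ d ≤ (A * x ^ (c - d)) * x ^ d :=
    mul_le_mul_of_nonneg_right hx (by positivity)
  nlinarith [hxd, h2]

/-- The sequence `n_k = ⌊k^(1/(1-β)+ε)⌋` is β-spaced: for every `M > 0`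
there is `n₀` such that for all `n > n₀` the interval `[n - M n^β, n + M n^β]`
contains at most one element of the sequence. -/
theorem stmt0 (β ε : ℝ) (hβ0 : 0 < β) (hβ1 : β < 1) (hε : 0 < ε)
    (nk : ℕ → ℕ)
    (hnk : ∀ k : ℕ, nk k = ⌊(k : ℝ) ^ (1 / (1 - β) + ε)⌋₊) :
    ∀ M : ℝ, 0 < M → ∃ n₀ : ℕ, ∀ n : ℕ, n₀ < n →
      ∀ k l : ℕ,
        ((n : ℝ) - M * (n : ℝ) ^ β ≤ nk k ∧ (nk k : ℝ) ≤ (n : ℝ) + M * (n : ℝ) ^ β) →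
        ((n : ℝ) - M * (n : ℝ) ^ β ≤ nk l ∧ (nk l : ℝ) ≤ (n : ℝ) + M * (n : ℝ) ^ β) →
        nk k = nk l := by
  intro M hM
  set α : ℝ := 1 / (1 - β) + ε with hαdef
  have h1β : 0 < 1 - β := by linarith
  have hα1 : 1 < α := by
    have : 1 ≤ 1 / (1 - β) := by
      rw [le_div_iff₀ h1β]; linarith
    simp only [hαdef]; linarith
  have hα0 : 0 < α := by linarith
  set γ : ℝ := 1 - 1 / α with hγdef
  have hβγ : β < γ := by
    have h2 : 1 / (1 - β) < α := by simp only [hαdef]; linarith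
    have h3 : 1 / α < 1 - β := by
      rw [div_lt_iff₀ hα0]
      rw [div_lt_iff₀ h1β] at h2
      linarith
    simp only [hγdef]; linarith
  have hγ0 : 0 < γ := lt_trans hβ0 hβγ
  -- monotonicity of nk
  have hmono : Monotone nk := by
    intro a b hab
    rw [hnk a, hnk b]
    exact Nat.floor_mono (Real.rpow_le_rpow (by positivity) (by exact_mod_cast hab) hα0.le)
  -- eventual inequalities
  have hE1 : ∀ᶠ x : ℝ in atTop, M * x ^ β + 0 < (1/2) * x ^ (1:ℝ) :=
    aux_ev (by norm_num) hβ0.le (by linarith) le_rfl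
  have hA2 : 0 < α / 2 ^ γ := by positivity
  have hE2 : ∀ᶠ x : ℝ in atTop, 2 * M * x ^ β + 1 < (α / 2 ^ γ) * x ^ γ :=
    aux_ev hA2 hβ0.le hβγ zero_le_one
  have hEn : ∀ᶠ n : ℕ in atTop,
      (M * (n:ℝ) ^ β + 0 < (1/2) * (n:ℝ) ^ (1:ℝ)) ∧
      (2 * M * (n:ℝ) ^ β + 1 < (α / 2 ^ γ) * (n:ℝ) ^ γ) :=
    tendsto_natCast_atTop_atTop.eventually (hE1.and hE2)
  rw [eventually_atTop] at hEn
  obtain ⟨n₀, hn₀⟩ := hEn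
  refine ⟨n₀ + 1, ?_⟩
  intro n hn k l hk hl
  obtain ⟨h1, h2⟩ := hn₀ n (by omega)
  rw [Real.rpow_one] at h1
  have hn1 : 1 ≤ n := by omega
  have hnR : (1:ℝ) ≤ (n:ℝ) := by exact_mod_cast hn1
  -- key claim
  have key : ∀ a b : ℕ,
      ((n : ℝ) - M * (n : ℝ) ^ β ≤ nk a ∧ (nk a : ℝ) ≤ (n : ℝ) + M * (n : ℝ) ^ β) →
      ((n : ℝ) - M * (n : ℝ) ^ β ≤ nk b ∧ (nk b : ℝ) ≤ (n : ℝ) + M * (n : ℝ) ^ β) →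
      nk a < nk b → False := by
    intro a b ha hb hab
    have haltb : a < b := by
      by_contra hcon
      exact absurd (hmono (not_lt.1 hcon)) (not_le.2 hab)
    set x : ℝ := (a : ℝ) with hxdef
    have hx0' : 0 ≤ x := Nat.cast_nonneg a
    have hka : (nk a : ℝ) ≤ x ^ α := by
      rw [hnk a]; exact Nat.floor_le (by positivity)
    -- nk a ≥ n/2 > 0
    have hlow : (n:ℝ)/2 ≤ (nk a : ℝ) := by
      have := ha.1; linarith
    have hxα : (n:ℝ)/2 ≤ x ^ α := le_trans hlow hka
    have hnpos : (0:ℝ) < (n:ℝ)/2 := by linarith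
    have hx0 : 0 < x := by
      by_contra hcon
      have hx00 : x = 0 := le_antisymm (not_lt.1 hcon) hx0'
      rw [hx00, Real.zero_rpow hα0.ne'] at hxα
      linarith
    have ha1 : 1 ≤ a := by
      rcases Nat.eq_zero_or_pos a with h0 | h0
      · exfalso
        rw [hxdef, h0] at hx0
        norm_num at hx0
      · exact h0
    have hx1 : (1:ℝ) ≤ x := by rw [hxdef]; exact_mod_cast ha1
    -- Bernoulli: (x+1)^α ≥ x^α + α * x^(α-1)
    have hbern : x ^ α + α * x ^ (α - 1) ≤ (x + 1) ^ α := by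
      have h4 : (1:ℝ) + α * (1/x) ≤ (1 + 1/x) ^ α :=
        one_add_mul_self_le_rpow_one_add (le_trans (by norm_num : (-1:ℝ) ≤ 0) (by positivity)) hα1.le
      have h5 : (x + 1) ^ α = x ^ α * (1 + 1/x) ^ α := by
        rw [← Real.mul_rpow hx0' (by positivity)]
        congr 1
        field_simp
      have h6 : x ^ α * (1 + α * (1/x)) ≤ x ^ α * (1 + 1/x) ^ α :=
        mul_le_mul_of_nonneg_left h4 (by positivity)
      have h7 : x ^ (α - 1) = x ^ α / x := by
        rw [Real.rpow_sub hx0, Real.rpow_one]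
      rw [h5]
      calc x ^ α + α * x ^ (α - 1) = x ^ α * (1 + α * (1/x)) := by
            rw [h7]; field_simp
        _ ≤ _ := h6
    -- nk b ≥ nk (a+1) > (x+1)^α - 1
    have hnkb : (x + 1) ^ α - 1 < (nk b : ℝ) := by
      have hb1 : nk (a + 1) ≤ nk b := hmono (by omega)
      have : (x + 1) ^ α < (nk (a+1) : ℝ) + 1 := by
        rw [hnk (a+1)]
        have := Nat.lt_floor_add_one ((((a+1):ℕ):ℝ) ^ α)
        push_cast at this ⊢
        convert this using 3
      have hb2 : (nk (a+1) : ℝ) ≤ (nk b : ℝ) := by exact_mod_cast hb1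
      linarith
    -- gap bound: α x^(α-1) < 2 M n^β + 1
    have hgap : α * x ^ (α - 1) < 2 * M * (n:ℝ) ^ β + 1 := by
      have := hb.2
      have := ha.1
      nlinarith [hka, hbern, hnkb]
    -- lower bound on x^(α-1)
    have hxlb : ((n:ℝ)/2) ^ γ ≤ x ^ (α - 1) := by
      have hroot : ((n:ℝ)/2) ^ (1/α) ≤ x := by
        have hh := Real.rpow_le_rpow hnpos.le hxα (by positivity : (0:ℝ) ≤ 1/α)
        have hpow : (x ^ α) ^ (1/α) = x := by
          rw [← Real.rpow_mul hx0', mul_one_div_cancel hα0.ne', Real.rpow_one]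
        rwa [hpow] at hh
      have := Real.rpow_le_rpow (by positivity) hroot (by linarith : (0:ℝ) ≤ α - 1)
      rwa [← Real.rpow_mul hnpos.le, show (1/α) * (α - 1) = γ by
        simp only [hγdef]; field_simp] at this
    have hfin : (α / 2 ^ γ) * (n:ℝ) ^ γ ≤ α * x ^ (α - 1) := by
      have hsplit : ((n:ℝ)/2) ^ γ = (n:ℝ) ^ γ / 2 ^ γ :=
        Real.div_rpow (by positivity) (by norm_num : (0:ℝ) ≤ 2) γ
      have := mul_le_mul_of_nonneg_left hxlb hα0.le
      rw [hsplit] at this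
      calc (α / 2 ^ γ) * (n:ℝ) ^ γ = α * ((n:ℝ) ^ γ / 2 ^ γ) := by ring
        _ ≤ α * x ^ (α - 1) := this
    exact lt_irrefl _ ((hfin.trans_lt hgap).trans h2)
  rcases lt_trichotomy (nk k) (nk l) with h | h | h
  · exact absurd (key k l hk hl h) (fun f => f)
  · exact h
  · exact absurd (key l k hl hk h) (fun f => f)
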